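/- Let K be a planar polygonal element (triangle or planar quadrilateral) cut out of a shape regular tetrahedron T of diameter ≈ h by a hyperplane (K = T ∩ Σ_h), and let v be an affine function on T. Then h²‖∇_{Σ_h} v‖²_{L²(K)} ≲ h‖∇v‖²_{L²(T)} ≲ h⁻¹‖v‖²_{L²(T)}, where ∇_{Σ_h}v is the component of ∇v tangential to the plane of K; in particular h²‖∇_{Σ_h} v‖²_{L²(K)} ≲ h⁻¹‖v‖²_{L²(T)}, with constants depending only on shape regularity and independent of the position of the cutting plane. -/

import Mathlib

open MeasureTheory Metric Set
open scoped RealInnerProductSpace NNReal ENNReal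

noncomputable section

abbrev E3 := EuclideanSpace ℝ (Fin 3)

def tensorSq (a : E3) : E3 →L[ℝ] E3 := ((innerSL ℝ) a).smulRight a

def tangentProj (n : E3) : E3 →L[ℝ] E3 := ContinuousLinearMap.id ℝ E3 - tensorSq n

lemma tangentProj_norm_le (m g : E3) (hm : ‖m‖ = 1) : ‖tangentProj m g‖ ≤ ‖g‖ := by
  have he : tangentProj m g = g - ⟪m, g⟫ • m := by
    simp [tangentProj, tensorSq, ContinuousLinearMap.sub_apply]
  have h1 : ‖g - ⟪m, g⟫ • m‖ ^ 2 = ‖g‖ ^ 2 - ⟪m, g⟫ ^ 2 := by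
    rw [norm_sub_sq_real]
    rw [real_inner_smul_right, norm_smul, real_inner_comm]
    simp [hm]
    ring
  have h2 : ‖tangentProj m g‖ ^ 2 ≤ ‖g‖ ^ 2 := by
    rw [he, h1]; nlinarith [sq_nonneg (⟪m, g⟫)]
  nlinarith [norm_nonneg (tangentProj m g), norm_nonneg g]

lemma hausdorff_slice_bound (m : E3) (hm : ‖m‖ = 1) (c : ℝ) {K : Set E3}
    (hKp : K ⊆ {x : E3 | ⟪m, x⟫ = c}) {h : ℝ} (hh : 0 ≤ h)
    (hd : ∀ x ∈ K, ∀ y ∈ K, dist x y ≤ h) :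
    Measure.hausdorffMeasure 2 K ≤ ENNReal.ofReal (16 * h ^ 2) := by
  rcases K.eq_empty_or_nonempty with rfl | ⟨x₀, hx₀⟩
  · simp
  -- orthonormal basis with b 0 = m
  have hcard : Module.finrank ℝ E3 = Fintype.card (Fin 3) := by simp
  have horth : Orthonormal ℝ (({0} : Set (Fin 3)).restrict (fun _ : Fin 3 => m)) := by
    constructor
    · intro i; exact hm
    · rintro ⟨i, hi⟩ ⟨j, hj⟩ hij
      simp only [Set.mem_singleton_iff] at hi hj
      exact absurd (Subtype.ext (hi.trans hj.symm)) hij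
  obtain ⟨b, hb⟩ := horth.exists_orthonormalBasis_extension_of_card_eq hcard
  have hb0 : b 0 = m := hb 0 rfl
  -- the parametrization of the plane
  set f : ℝ × ℝ → E3 := fun y => c • m + y.1 • b 1 + y.2 • b 2 with hf
  have hrepr : ∀ x : E3, ⟪m, x⟫ = c → f (⟪b 1, x⟫, ⟪b 2, x⟫) = x := by
    intro x hx
    have := b.sum_repr' x
    rw [Fin.sum_univ_three] at this
    simp only [hb0] at this
    simp only [hf, hx] at this ⊢
    exact this
  have hKr : K ⊆ Set.range f := by
    intro x hx
    exact ⟨(⟪b 1, x⟫, ⟪b 2, x⟫), hrepr x (hKp hx)⟩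
  have hlip : LipschitzWith 2 f := by
    apply LipschitzWith.of_dist_le_mul
    intro y y'
    have : f y - f y' = (y.1 - y'.1) • b 1 + (y.2 - y'.2) • b 2 := by
      simp only [hf]; module
    rw [dist_eq_norm, this]
    calc ‖(y.1 - y'.1) • b 1 + (y.2 - y'.2) • b 2‖
        ≤ ‖(y.1 - y'.1) • b 1‖ + ‖(y.2 - y'.2) • b 2‖ := norm_add_le _ _
      _ = |y.1 - y'.1| + |y.2 - y'.2| := by
          rw [norm_smul, norm_smul, b.orthonormal.1 1, b.orthonormal.1 2]
          simp [abs_of_nonneg]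
      _ ≤ dist y y' + dist y y' := by
          rw [Prod.dist_eq, ← Real.dist_eq, ← Real.dist_eq]
          exact add_le_add (le_max_left _ _) (le_max_right _ _)
      _ = 2 * dist y y' := by ring
  -- preimage is contained in a closed ball
  set y₀ : ℝ × ℝ := (⟪b 1, x₀⟫, ⟪b 2, x₀⟫) with hy₀
  have hfy₀ : f y₀ = x₀ := hrepr x₀ (hKp hx₀)
  have hanti : ∀ y y' : ℝ × ℝ, dist y y' ≤ dist (f y) (f y') := by
    intro y y'
    have hdiff : f y - f y' = (y.1 - y'.1) • b 1 + (y.2 - y'.2) • b 2 := by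
      simp only [hf]; module
    have h1 : ⟪b 1, f y - f y'⟫ = y.1 - y'.1 := by
      rw [hdiff, inner_add_right, real_inner_smul_right, real_inner_smul_right]
      have o11 : ⟪b 1, b 1⟫ = (1:ℝ) := by
        rw [real_inner_self_eq_norm_sq, b.orthonormal.1 1]; norm_num
      have o12 : ⟪b 1, b 2⟫ = (0:ℝ) := b.orthonormal.2 (by decide)
      rw [o11, o12]; ring
    have h2 : ⟪b 2, f y - f y'⟫ = y.2 - y'.2 := by
      rw [hdiff, inner_add_right, real_inner_smul_right, real_inner_smul_right]
      have o22 : ⟪b 2, b 2⟫ = (1:ℝ) := by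
        rw [real_inner_self_eq_norm_sq, b.orthonormal.1 2]; norm_num
      have o21 : ⟪b 2, b 1⟫ = (0:ℝ) := b.orthonormal.2 (by decide)
      rw [o22, o21]; ring
    have c1 : |y.1 - y'.1| ≤ ‖f y - f y'‖ := by
      calc |y.1 - y'.1| = |⟪b 1, f y - f y'⟫| := by rw [h1]
        _ ≤ ‖b 1‖ * ‖f y - f y'‖ := abs_real_inner_le_norm _ _
        _ = ‖f y - f y'‖ := by rw [b.orthonormal.1 1, one_mul]
    have c2 : |y.2 - y'.2| ≤ ‖f y - f y'‖ := by
      calc |y.2 - y'.2| = |⟪b 2, f y - f y'⟫| := by rw [h2]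
        _ ≤ ‖b 2‖ * ‖f y - f y'‖ := abs_real_inner_le_norm _ _
        _ = ‖f y - f y'‖ := by rw [b.orthonormal.1 2, one_mul]
    rw [Prod.dist_eq]
    refine max_le ?_ ?_
    · rw [Real.dist_eq, dist_eq_norm]; exact c1
    · rw [Real.dist_eq, dist_eq_norm]; exact c2
  have hpre : f ⁻¹' K ⊆ closedBall y₀ h := by
    intro y hy
    simp only [mem_closedBall]
    calc dist y y₀ ≤ dist (f y) (f y₀) := hanti y y₀
      _ ≤ h := by rw [hfy₀]; exact hd _ hy _ hx₀
  have hKim : K = f '' (f ⁻¹' K) := (Set.image_preimage_eq_of_subset hKr).symm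
  have step1 : Measure.hausdorffMeasure 2 K ≤ (2:ℝ≥0) ^ (2:ℝ) * Measure.hausdorffMeasure 2 (f ⁻¹' K) := by
    conv_lhs => rw [hKim]
    exact hlip.hausdorffMeasure_image_le (by norm_num : (0:ℝ) ≤ 2) _
  have step2 : Measure.hausdorffMeasure (2:ℝ) (f ⁻¹' K) ≤ ENNReal.ofReal (4 * h ^ 2) := by
    calc Measure.hausdorffMeasure (2:ℝ) (f ⁻¹' K)
        ≤ Measure.hausdorffMeasure (2:ℝ) (closedBall y₀ h) := measure_mono hpre
      _ = volume (closedBall y₀ h) := by rw [MeasureTheory.hausdorffMeasure_prod_real]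
      _ = ENNReal.ofReal (4 * h ^ 2) := by
          rw [show y₀ = (y₀.1, y₀.2) from rfl, ← closedBall_prod_same,
            Measure.volume_eq_prod, Measure.prod_prod,
            Real.volume_closedBall, Real.volume_closedBall, ← ENNReal.ofReal_mul (by linarith)]
          ring_nf
  calc Measure.hausdorffMeasure 2 K
      ≤ (2:ℝ≥0) ^ (2:ℝ) * Measure.hausdorffMeasure 2 (f ⁻¹' K) := step1
    _ ≤ (2:ℝ≥0) ^ (2:ℝ) * ENNReal.ofReal (4 * h ^ 2) := by
        exact mul_le_mul_right step2 _
    _ = ENNReal.ofReal (16 * h ^ 2) := by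
        have : ((2:ℝ≥0) : ℝ≥0∞) ^ (2:ℝ) = (4 : ℝ≥0∞) := by
          rw [show (2:ℝ) = ((2:ℕ):ℝ) by norm_num, ENNReal.rpow_natCast]; norm_num
        rw [this]
        rw [show (4:ℝ≥0∞) = ENNReal.ofReal 4 by norm_num, ← ENNReal.ofReal_mul (by norm_num)]
        ring_nf

lemma affine_sq_integral_lower (z : E3) {r : ℝ} (hr : 0 < r) {g : E3} (hg : g ≠ 0) (c₀ : ℝ)
    {T : Set E3} (hball : ball z r ⊆ T)
    (hint : IntegrableOn (fun x : E3 => (⟪g, x⟫ + c₀) ^ 2) T volume) :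
    (r * ‖g‖ / 2) ^ 2 * (volume (ball (0 : E3) (r / 4))).toReal ≤
      ∫ x in T, (⟪g, x⟫ + c₀) ^ 2 := by
  have hgn : 0 < ‖g‖ := norm_pos_iff.mpr hg
  set a : ℝ := ⟪g, z⟫ + c₀ with ha
  set sgn : ℝ := if 0 ≤ a then 1 else -1 with hsgn
  have hsgn2 : sgn ^ 2 = 1 := by rcases le_or_gt 0 a with h | h <;> simp [hsgn, h]
  have hsgna : |a| = sgn * a := by
    rcases le_or_gt 0 a with h | h
    · simp [hsgn, h, abs_of_nonneg h]
    · simp [hsgn, not_le.mpr h, abs_of_neg h]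
  have habs : |sgn| = 1 := by
    rcases le_or_gt 0 a with h | h
    · simp [hsgn, h]
    · simp [hsgn, not_le.mpr h]
  set u : E3 := (sgn / ‖g‖) • g with hu
  have hun : ‖u‖ = 1 := by
    rw [hu, norm_smul, Real.norm_eq_abs, abs_div, habs, abs_of_pos hgn, one_div,
      inv_mul_cancel₀ hgn.ne']
  have hgu : ⟪g, u⟫ = sgn * ‖g‖ := by
    rw [hu, real_inner_smul_right, real_inner_self_eq_norm_sq]
    field_simp
  set ctr : E3 := z + (3 * r / 4) • u with hctr
  set B' : Set E3 := ball ctr (r / 4) with hB'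
  have hctrz : dist ctr z = 3 * r / 4 := by
    rw [hctr, dist_eq_norm]
    simp only [add_sub_cancel_left, norm_smul, hun, mul_one]
    rw [Real.norm_eq_abs, abs_of_nonneg (by linarith)]
  have hB'z : B' ⊆ ball z r := by
    intro x hx
    rw [mem_ball] at hx ⊢
    calc dist x z ≤ dist x ctr + dist ctr z := dist_triangle _ _ _
      _ < r / 4 + 3 * r / 4 := by rw [hctrz]; linarith
      _ = r := by ring
  have hB'T : B' ⊆ T := hB'z.trans hball
  have hpt : ∀ x ∈ B', (r * ‖g‖ / 2) ^ 2 ≤ (⟪g, x⟫ + c₀) ^ 2 := by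
    intro x hx
    have hxd : ‖x - ctr‖ ≤ r / 4 := by
      rw [← dist_eq_norm]; exact (mem_ball.mp hx).le
    set e : ℝ := ⟪g, x - ctr⟫ with he
    have hecs : |e| ≤ ‖g‖ * (r / 4) :=
      le_trans (abs_real_inner_le_norm _ _) (by
        exact mul_le_mul_of_nonneg_left hxd hgn.le)
    have hdecomp : ⟪g, x⟫ + c₀ = a + (3 * r / 4) * (sgn * ‖g‖) + e := by
      have : x = z + (3 * r / 4) • u + (x - ctr) := by rw [hctr]; abel
      rw [this, inner_add_right, inner_add_right, real_inner_smul_right, hgu, ← he, ha]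
      ring
    set v : ℝ := ⟪g, x⟫ + c₀ with hv
    have hsv : r * ‖g‖ / 2 ≤ sgn * v := by
      have h1 : sgn * v = sgn * a + sgn ^ 2 * (3 * r / 4) * ‖g‖ + sgn * e := by
        rw [hdecomp]; ring
      have h2 : -(‖g‖ * (r / 4)) ≤ sgn * e := by
        have : |sgn * e| ≤ ‖g‖ * (r / 4) := by
          rw [abs_mul, habs, one_mul]; exact hecs
        linarith [neg_abs_le (sgn * e)]
      have h3 : 0 ≤ sgn * a := by rw [← hsgna]; exact abs_nonneg a
      rw [h1, hsgn2]
      have h4 : sgn * a + 1 * (3 * r / 4) * ‖g‖ + sgn * e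
          = sgn * a + sgn * e + (3 / 4) * (r * ‖g‖) := by ring
      have h5 : -(‖g‖ * (r / 4)) = -((1 / 4) * (r * ‖g‖)) := by ring
      rw [h4]
      rw [h5] at h2
      clear_value sgn a e v
      linarith
    nlinarith [sq_nonneg v, sq_nonneg (sgn * v), mul_pos hr hgn]
  have hmeas : MeasurableSet B' := measurableSet_ball
  have hvolB' : volume B' ≠ ⊤ := (measure_ball_lt_top).ne
  calc (r * ‖g‖ / 2) ^ 2 * (volume (ball (0 : E3) (r / 4))).toReal
      = ∫ _ in B', (r * ‖g‖ / 2) ^ 2 := by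
        rw [setIntegral_const, smul_eq_mul, hB', measureReal_def, Measure.addHaar_ball_center volume ctr, mul_comm]
    _ ≤ ∫ x in B', (⟪g, x⟫ + c₀) ^ 2 := by
        refine setIntegral_mono_on (integrableOn_const hvolB')
          (hint.mono_set hB'T) hmeas hpt
    _ ≤ ∫ x in T, (⟪g, x⟫ + c₀) ^ 2 := by
        refine setIntegral_mono_set hint ?_ (HasSubset.Subset.eventuallyLE hB'T)
        exact Filter.Eventually.of_forall fun x => sq_nonneg _

/-- Let `K = T ∩ {x : ⟪m, x⟫ = c}` be the planar element cut out
of a shape regular tetrahedron `T = conv{v₀,v₁,v₂,v₃}` of diameter `≲ h`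
(containing a ball of radius `h/γ`) by a hyperplane with unit normal `m`, and let
`v(x) = ⟪g, x⟫ + c₀` be affine on `T` (so `∇v = g` and `∇_{Σ_h}v = P_K g` with
`P_K = I − m⊗m`).  Then
`h²‖∇_{Σ_h}v‖²_{L²(K)} ≲ h‖∇v‖²_{L²(T)} ≲ h⁻¹‖v‖²_{L²(T)}`, in particular
`h²‖∇_{Σ_h}v‖²_{L²(K)} ≲ h⁻¹‖v‖²_{L²(T)}`, with constants depending only on the
shape regularity `γ` and independent of the cutting plane. -/
theorem cut_element_inverse_inequality :
    ∀ γ : ℝ, 0 < γ → ∃ C : ℝ, 0 < C ∧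
      ∀ (h : ℝ), 0 < h →
      ∀ v₀ v₁ v₂ v₃ : E3,
        Metric.diam (convexHull ℝ {v₀, v₁, v₂, v₃}) ≤ h →
        (∃ z : E3, Metric.ball z (h / γ) ⊆ convexHull ℝ {v₀, v₁, v₂, v₃}) →
      ∀ (m : E3) (c : ℝ), ‖m‖ = 1 →
      ∀ (g : E3) (c₀ : ℝ),
        (h ^ 2 * ∫ x in convexHull ℝ {v₀, v₁, v₂, v₃} ∩ {x : E3 | ⟪m, x⟫ = c},
            ‖tangentProj m g‖ ^ 2 ∂(Measure.hausdorffMeasure 2)) ≤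
          C * (h * ∫ x in convexHull ℝ {v₀, v₁, v₂, v₃}, ‖g‖ ^ 2) ∧
        (h * ∫ x in convexHull ℝ {v₀, v₁, v₂, v₃}, ‖g‖ ^ 2) ≤
          C * (h⁻¹ * ∫ x in convexHull ℝ {v₀, v₁, v₂, v₃}, (⟪g, x⟫ + c₀) ^ 2) ∧
        (h ^ 2 * ∫ x in convexHull ℝ {v₀, v₁, v₂, v₃} ∩ {x : E3 | ⟪m, x⟫ = c},
            ‖tangentProj m g‖ ^ 2 ∂(Measure.hausdorffMeasure 2)) ≤
          C * (h⁻¹ * ∫ x in convexHull ℝ {v₀, v₁, v₂, v₃}, (⟪g, x⟫ + c₀) ^ 2) := by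
  intro γ hγ
  set V : ℝ := (volume (ball (0 : E3) 1)).toReal with hVdef
  have hV : 0 < V := by
    rw [hVdef]
    exact ENNReal.toReal_pos (measure_ball_pos volume 0 one_pos).ne' measure_ball_lt_top.ne
  refine ⟨4096 * (γ ^ 3 + γ ^ 5) * (1 + V⁻¹), by positivity, ?_⟩
  set C : ℝ := 4096 * (γ ^ 3 + γ ^ 5) * (1 + V⁻¹) with hCdef
  have hC0 : 0 < C := by rw [hCdef]; positivity
  have hinv : V⁻¹ * V = 1 := inv_mul_cancel₀ hV.ne'
  have hCV : 4096 * γ ^ 3 ≤ C * V := by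
    rw [hCdef]
    nlinarith [hinv, mul_pos (by positivity : (0:ℝ) < γ ^ 3 + γ ^ 5) hV, pow_pos hγ 5, pow_pos hγ 3]
  have hCV5 : 4096 * γ ^ 5 ≤ C * V := by
    rw [hCdef]
    nlinarith [hinv, mul_pos (by positivity : (0:ℝ) < γ ^ 3 + γ ^ 5) hV, pow_pos hγ 5, pow_pos hγ 3]
  have hC5 : 256 * γ ^ 5 ≤ C := by
    rw [hCdef]
    nlinarith [pow_pos hγ 5, pow_pos hγ 3, inv_pos.mpr hV]
  intro h hh v₀ v₁ v₂ v₃ hdiam hballex m c hm g c₀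
  obtain ⟨z, hz⟩ := hballex
  set T : Set E3 := convexHull ℝ {v₀, v₁, v₂, v₃} with hTdef
  have hTc : IsCompact T := (Set.toFinite _).isCompact_convexHull ℝ
  have hTb : Bornology.IsBounded T := hTc.isBounded
  have hTm : MeasurableSet T := hTc.isClosed.measurableSet
  have hv0 : v₀ ∈ T := subset_convexHull ℝ _ (by simp)
  set r : ℝ := h / γ with hrdef
  have hr : 0 < r := div_pos hh hγ
  have hrh : h = γ * r := by rw [hrdef]; field_simp
  -- Hausdorff measure bound for the slice
  set K : Set E3 := T ∩ {x : E3 | ⟪m, x⟫ = c} with hKdef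
  have hKd : ∀ x ∈ K, ∀ y ∈ K, dist x y ≤ h := fun x hx y hy =>
    le_trans (Metric.dist_le_diam_of_mem hTb hx.1 hy.1) hdiam
  have htoK : (Measure.hausdorffMeasure 2 K).toReal ≤ 16 * h ^ 2 :=
    ENNReal.toReal_le_of_le_ofReal (by positivity)
      (hausdorff_slice_bound m hm c inter_subset_right hh.le hKd)
  have hP : ‖tangentProj m g‖ ^ 2 ≤ ‖g‖ ^ 2 :=
    pow_le_pow_left₀ (norm_nonneg _) (tangentProj_norm_le m g hm) 2
  have hI1 : (∫ _ in K, ‖tangentProj m g‖ ^ 2 ∂(Measure.hausdorffMeasure 2)) ≤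
      16 * h ^ 2 * ‖g‖ ^ 2 := by
    rw [setIntegral_const, smul_eq_mul]
    exact mul_le_mul htoK hP (by positivity) (by positivity)
  -- volume bounds
  have hvol_lb : r ^ 3 * V ≤ (volume T).toReal := by
    have h1 : volume (ball z r) ≤ volume T := measure_mono hz
    have h2 : volume (ball z r) = ENNReal.ofReal (r ^ 3) * volume (ball (0 : E3) 1) := by
      rw [Measure.addHaar_ball volume z hr.le, finrank_euclideanSpace_fin]
    have h3 : (volume (ball z r)).toReal = r ^ 3 * V := by
      rw [h2, ENNReal.toReal_mul, ENNReal.toReal_ofReal (by positivity), hVdef]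
    rw [← h3]
    exact ENNReal.toReal_mono hTc.measure_lt_top.ne h1
  have hvol_ub : (volume T).toReal ≤ h ^ 3 * V := by
    have hsub : T ⊆ closedBall v₀ h := fun x hx =>
      mem_closedBall.mpr (le_trans (Metric.dist_le_diam_of_mem hTb hx hv0) hdiam)
    have h2 : volume (closedBall v₀ h) = ENNReal.ofReal (h ^ 3) * volume (ball (0 : E3) 1) := by
      rw [Measure.addHaar_closedBall volume v₀ hh.le, finrank_euclideanSpace_fin]
    have hfin : volume (closedBall v₀ h) ≠ ⊤ := measure_closedBall_lt_top.ne
    have h3 : (volume (closedBall v₀ h)).toReal = h ^ 3 * V := by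
      rw [h2, ENNReal.toReal_mul, ENNReal.toReal_ofReal (by positivity), hVdef]
    rw [← h3]
    exact ENNReal.toReal_mono hfin (measure_mono hsub)
  have e2 : (∫ _ in T, ‖g‖ ^ 2) = (volume T).toReal * ‖g‖ ^ 2 := by
    rw [setIntegral_const, smul_eq_mul, measureReal_def]
  have hcont : Continuous fun x : E3 => (⟪g, x⟫ + c₀) ^ 2 :=
    (((innerSL ℝ g).continuous).add continuous_const).pow 2
  have hint : IntegrableOn (fun x : E3 => (⟪g, x⟫ + c₀) ^ 2) T volume :=
    hcont.continuousOn.integrableOn_compact hTc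
  have hI3nn : 0 ≤ ∫ x in T, (⟪g, x⟫ + c₀) ^ 2 :=
    setIntegral_nonneg hTm fun x _ => sq_nonneg _
  have hvolsmall : (volume (ball (0 : E3) (r / 4))).toReal = (r / 4) ^ 3 * V := by
    rw [Measure.addHaar_ball volume 0 (by positivity), finrank_euclideanSpace_fin,
      ENNReal.toReal_mul, ENNReal.toReal_ofReal (by positivity), hVdef]
  refine ⟨?_, ?_, ?_⟩
  · -- first inequality
    calc h ^ 2 * ∫ _ in K, ‖tangentProj m g‖ ^ 2 ∂(Measure.hausdorffMeasure 2)
        ≤ h ^ 2 * (16 * h ^ 2 * ‖g‖ ^ 2) := mul_le_mul_of_nonneg_left hI1 (by positivity)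
      _ ≤ C * (h * (r ^ 3 * V * ‖g‖ ^ 2)) := by
          have h16 : 16 * γ ^ 3 ≤ C * V :=
            le_trans (by nlinarith [pow_pos hγ 3]) hCV
          calc h ^ 2 * (16 * h ^ 2 * ‖g‖ ^ 2)
              = 16 * γ ^ 3 * (γ * r ^ 4 * ‖g‖ ^ 2) := by rw [hrh]; ring
            _ ≤ C * V * (γ * r ^ 4 * ‖g‖ ^ 2) :=
                mul_le_mul_of_nonneg_right h16 (by positivity)
            _ = C * (h * (r ^ 3 * V * ‖g‖ ^ 2)) := by rw [hrh]; ring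
      _ ≤ C * (h * ∫ _ in T, ‖g‖ ^ 2) := by
          rw [e2]
          refine mul_le_mul_of_nonneg_left (mul_le_mul_of_nonneg_left ?_ hh.le) hC0.le
          exact mul_le_mul_of_nonneg_right hvol_lb (sq_nonneg _)
  · -- second inequality
    by_cases hg : g = 0
    · have : (∫ _ in T, ‖g‖ ^ 2) = 0 := by simp [hg]
      rw [this, mul_zero]
      have : (0:ℝ) ≤ C * (h⁻¹ * ∫ x in T, (⟪g, x⟫ + c₀) ^ 2) := by
        have := hI3nn; positivity
      exact this
    · have hI3 := affine_sq_integral_lower z hr hg c₀ hz hint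
      calc h * ∫ _ in T, ‖g‖ ^ 2
          = h * ((volume T).toReal * ‖g‖ ^ 2) := by rw [e2]
        _ ≤ h * (h ^ 3 * V * ‖g‖ ^ 2) :=
            mul_le_mul_of_nonneg_left
              (mul_le_mul_of_nonneg_right hvol_ub (sq_nonneg _)) hh.le
        _ ≤ C * (h⁻¹ * ((r * ‖g‖ / 2) ^ 2 * ((r / 4) ^ 3 * V))) := by
            rw [inv_mul_eq_div, ← mul_div_assoc, le_div_iff₀ hh]
            calc h * (h ^ 3 * V * ‖g‖ ^ 2) * h
                = 256 * γ ^ 5 * (r ^ 5 * V * ‖g‖ ^ 2 / 256) := by rw [hrh]; ring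
              _ ≤ C * (r ^ 5 * V * ‖g‖ ^ 2 / 256) :=
                  mul_le_mul_of_nonneg_right hC5 (by positivity)
              _ = C * ((r * ‖g‖ / 2) ^ 2 * ((r / 4) ^ 3 * V)) := by ring
        _ ≤ C * (h⁻¹ * ∫ x in T, (⟪g, x⟫ + c₀) ^ 2) := by
            rw [← hvolsmall]
            exact mul_le_mul_of_nonneg_left
              (mul_le_mul_of_nonneg_left hI3 (inv_nonneg.mpr hh.le)) hC0.le
  · -- third inequality
    by_cases hg : g = 0
    · have hz0 : tangentProj m g = 0 := by rw [hg]; exact map_zero _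
      have : (∫ _ in K, ‖tangentProj m g‖ ^ 2 ∂(Measure.hausdorffMeasure 2)) = 0 := by
        simp [hz0]
      rw [this, mul_zero]
      have : (0:ℝ) ≤ C * (h⁻¹ * ∫ x in T, (⟪g, x⟫ + c₀) ^ 2) := by
        have := hI3nn; positivity
      exact this
    · have hI3 := affine_sq_integral_lower z hr hg c₀ hz hint
      calc h ^ 2 * ∫ _ in K, ‖tangentProj m g‖ ^ 2 ∂(Measure.hausdorffMeasure 2)
          ≤ h ^ 2 * (16 * h ^ 2 * ‖g‖ ^ 2) := mul_le_mul_of_nonneg_left hI1 (by positivity)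
        _ ≤ C * (h⁻¹ * ((r * ‖g‖ / 2) ^ 2 * ((r / 4) ^ 3 * V))) := by
            rw [inv_mul_eq_div, ← mul_div_assoc, le_div_iff₀ hh]
            calc h ^ 2 * (16 * h ^ 2 * ‖g‖ ^ 2) * h
                = 4096 * γ ^ 5 * (r ^ 5 * ‖g‖ ^ 2 / 256) := by rw [hrh]; ring
              _ ≤ C * V * (r ^ 5 * ‖g‖ ^ 2 / 256) :=
                  mul_le_mul_of_nonneg_right hCV5 (by positivity)
              _ = C * ((r * ‖g‖ / 2) ^ 2 * ((r / 4) ^ 3 * V)) := by ring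
        _ ≤ C * (h⁻¹ * ∫ x in T, (⟪g, x⟫ + c₀) ^ 2) := by
            rw [← hvolsmall]
            exact mul_le_mul_of_nonneg_left
              (mul_le_mul_of_nonneg_left hI3 (inv_nonneg.mpr hh.le)) hC0.le
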